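/- arXiv:2003.10062 — 3 statements merged into one kernel-verified Lean document; each statement's English description precedes it below -/
import Mathlib

section
/- Let 0 ≤ r < a be real numbers and let f : ℝ → ℝ be continuous on [r, a]. Then the function s ↦ f(s)·s/√(s² − r²) is integrable on (r, a), and ∫_{−√(a²−r²)}^{√(a²−r²)} f(√(r² + z²)) dz = 2 ∫_r^a f(s)·s/√(s² − r²) ds. -/
open MeasureTheory

/-- One-dimensional change of variables `s = √(r² + z²)`: for `0 ≤ r < a` and `f`
continuous on `[r, a]`, the function `s ↦ f(s)·s/√(s² − r²)` is integrable on `(r, a)`,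
and `∫_{−√(a²−r²)}^{√(a²−r²)} f(√(r² + z²)) dz = 2 ∫_r^a f(s)·s/√(s² − r²) ds`. -/
theorem integral_radial_change_of_variables (r a : ℝ) (hr : 0 ≤ r) (hra : r < a)
    (f : ℝ → ℝ) (hf : ContinuousOn f (Set.Icc r a)) :
    IntegrableOn (fun s => f s * s / Real.sqrt (s ^ 2 - r ^ 2)) (Set.Ioo r a) volume ∧
      ∫ z in -Real.sqrt (a ^ 2 - r ^ 2)..Real.sqrt (a ^ 2 - r ^ 2),
          f (Real.sqrt (r ^ 2 + z ^ 2)) =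
        2 * ∫ s in r..a, f s * s / Real.sqrt (s ^ 2 - r ^ 2) := by
  set L : ℝ := Real.sqrt (a ^ 2 - r ^ 2) with hL
  set ψ : ℝ → ℝ := fun s => Real.sqrt (s ^ 2 - r ^ 2) with hψ
  set ψ' : ℝ → ℝ := fun s => s / Real.sqrt (s ^ 2 - r ^ 2) with hψ'
  set g : ℝ → ℝ := fun z => f (Real.sqrt (r ^ 2 + z ^ 2)) with hg
  have hψcont : ContinuousOn ψ (Set.Icc r a) := by
    exact (Real.continuous_sqrt.comp (by continuity)).continuousOn
  have hψderiv : ∀ x ∈ Set.Ioo r a, HasDerivAt ψ (ψ' x) x := by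
    intro x hx
    have hx2 : x ^ 2 - r ^ 2 ≠ 0 := by
      have : r ^ 2 < x ^ 2 := by nlinarith [hx.1, hx.2]
      nlinarith
    have h1 : HasDerivAt (fun s : ℝ => s ^ 2 - r ^ 2) (2 * x) x := by
      simpa using ((hasDerivAt_pow 2 x).sub_const (r ^ 2))
    have h2 := (Real.hasDerivAt_sqrt hx2).comp x h1
    have hxpos : (0:ℝ) < x ^ 2 - r ^ 2 := by nlinarith [hx.1, hx.2, hr]
    refine h2.congr_deriv ?_
    rw [hψ']
    field_simp
  have hψ'nonneg : ∀ x ∈ Set.Ioo r a, 0 ≤ ψ' x := by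
    intro x hx
    exact div_nonneg (le_trans hr hx.1.le) (Real.sqrt_nonneg _)
  -- ψ' is integrable on Ioc r a
  have hψ'int : IntegrableOn ψ' (Set.Ioc r a) volume :=
    intervalIntegral.integrableOn_deriv_of_nonneg hψcont hψderiv hψ'nonneg
  -- bound for f
  obtain ⟨C, hC⟩ : ∃ C, ∀ x ∈ Set.Icc r a, ‖f x‖ ≤ C :=
    (isCompact_Icc.exists_bound_of_continuousOn hf)
  -- integrability of the main integrand on Ioc
  have hmeas : AEStronglyMeasurable (fun s => f s * s / Real.sqrt (s ^ 2 - r ^ 2))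
      (volume.restrict (Set.Ioc r a)) := by
    apply ContinuousOn.aestronglyMeasurable _ measurableSet_Ioc
    apply ContinuousOn.div
    · exact (hf.mono (Set.Ioc_subset_Icc_self)).mul (continuous_id.continuousOn)
    · exact (Real.continuous_sqrt.comp (by continuity)).continuousOn
    · intro x hx
      have : (0:ℝ) < x ^ 2 - r ^ 2 := by nlinarith [hx.1, hx.2, hr]
      positivity
  have hintIoc : IntegrableOn (fun s => f s * s / Real.sqrt (s ^ 2 - r ^ 2))
      (Set.Ioc r a) volume := by
    refine Integrable.mono' (hψ'int.const_mul C) hmeas ?_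
    filter_upwards [ae_restrict_mem measurableSet_Ioc] with x hx
    have hfx : ‖f x‖ ≤ C := hC x (Set.Ioc_subset_Icc_self hx)
    have hxnn : 0 ≤ x := le_trans hr hx.1.le
    have hsq : 0 ≤ Real.sqrt (x ^ 2 - r ^ 2) := Real.sqrt_nonneg _
    have : ‖f x * x / Real.sqrt (x ^ 2 - r ^ 2)‖
        = ‖f x‖ * (x / Real.sqrt (x ^ 2 - r ^ 2)) := by
      rw [mul_div_assoc, norm_mul, Real.norm_of_nonneg (div_nonneg hxnn hsq)]
    rw [this]
    have hψ'x : ψ' x = x / Real.sqrt (x ^ 2 - r ^ 2) := rfl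
    rw [hψ'x]
    exact mul_le_mul_of_nonneg_right hfx (div_nonneg hxnn hsq)
  have hintIoo : IntegrableOn (fun s => f s * s / Real.sqrt (s ^ 2 - r ^ 2))
      (Set.Ioo r a) volume := hintIoc.mono_set Set.Ioo_subset_Ioc_self
  refine ⟨hintIoo, ?_⟩
  -- basic facts
  have hLnn : 0 ≤ L := Real.sqrt_nonneg _
  have hψr : ψ r = 0 := by simp [hψ]
  have hψa : ψ a = L := rfl
  have huIcc : Set.uIcc r a = Set.Icc r a := Set.uIcc_of_le hra.le
  -- image of ψ is inside [0, L]
  have himg : ∀ x ∈ Set.Icc r a, ψ x ∈ Set.Icc 0 L := by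
    intro x hx
    constructor
    · exact Real.sqrt_nonneg _
    · exact Real.sqrt_le_sqrt (by nlinarith [hx.1, hx.2])
  -- g is continuous on Icc (-L) L
  have hgcont : ContinuousOn g (Set.Icc (-L) L) := by
    apply hf.comp (Real.continuous_sqrt.comp (by continuity)).continuousOn
    intro z hz
    have habs : |z| ≤ L := abs_le.mpr ⟨hz.1, hz.2⟩
    have hz2 : z ^ 2 ≤ L ^ 2 := by nlinarith [sq_abs z, abs_nonneg z]
    have hL2 : L ^ 2 = a ^ 2 - r ^ 2 := Real.sq_sqrt (by nlinarith)
    have h1 : r ^ 2 + z ^ 2 ≤ a ^ 2 := by nlinarith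
    constructor
    · exact (Real.le_sqrt hr (by positivity)).mpr (by show r ^ 2 ≤ r ^ 2 + z ^ 2; nlinarith [sq_nonneg z])
    · calc Real.sqrt (r ^ 2 + z ^ 2) ≤ Real.sqrt (a ^ 2) := Real.sqrt_le_sqrt h1
        _ = a := Real.sqrt_sq (le_trans hr hra.le)
  -- change of variables
  have hsub : (∫ x in r..a, ψ' x • (g ∘ ψ) x) = ∫ u in ψ r..ψ a, g u := by
    apply intervalIntegral.integral_comp_smul_deriv''' (f := ψ) (f' := ψ') (g := g)
    · rw [huIcc]; exact hψcont
    · rw [min_eq_left hra.le, max_eq_right hra.le]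
      intro x hx
      exact (hψderiv x hx).hasDerivWithinAt
    · rw [min_eq_left hra.le, max_eq_right hra.le]
      apply hgcont.mono
      intro z hz
      obtain ⟨x, hx, rfl⟩ := hz
      have := himg x (Set.Ioo_subset_Icc_self hx)
      exact ⟨le_trans (neg_nonpos.mpr hLnn) this.1, this.2⟩
    · apply (hgcont.mono ?_).integrableOn_compact
      · have : IsCompact (Set.Icc r a) := isCompact_Icc
        rw [huIcc]; exact this.image_of_continuousOn hψcont
      · rw [huIcc]
        intro z hz
        obtain ⟨x, hx, rfl⟩ := hz
        have := himg x hx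
        exact ⟨le_trans (neg_nonpos.mpr hLnn) this.1, this.2⟩
    · rw [huIcc, integrableOn_Icc_iff_integrableOn_Ioc]
      apply hintIoc.congr_fun _ measurableSet_Ioc
      intro x hx
      have hxnn : 0 ≤ x := le_trans hr hx.1.le
      have hxr : r ^ 2 ≤ x ^ 2 := by nlinarith [hx.1]
      have hψx : Real.sqrt (r ^ 2 + ψ x ^ 2) = x := by
        rw [hψ]
        simp only
        rw [Real.sq_sqrt (by linarith), add_sub_cancel, Real.sqrt_sq hxnn]
      show f x * x / Real.sqrt (x ^ 2 - r ^ 2) = ψ' x • (g ∘ ψ) x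
      simp only [Function.comp, smul_eq_mul, hg, hψx, hψ']
      ring
  -- identify the substituted integral with the target
  have heq2 : (∫ s in r..a, f s * s / Real.sqrt (s ^ 2 - r ^ 2))
      = ∫ u in (0:ℝ)..L, g u := by
    rw [← hψr, ← hψa, ← hsub]
    apply intervalIntegral.integral_congr
    rw [huIcc]
    intro x hx
    rcases eq_or_lt_of_le hx.1 with h | h
    · have hx0 : Real.sqrt (x ^ 2 - r ^ 2) = 0 := by rw [← h]; simp
      show f x * x / Real.sqrt (x ^ 2 - r ^ 2) = ψ' x • (g ∘ ψ) x
      simp only [Function.comp, smul_eq_mul, hψ', hψ, hx0]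
      simp
    · have hxnn : 0 ≤ x := le_trans hr h.le
      have hψx : Real.sqrt (r ^ 2 + ψ x ^ 2) = x := by
        rw [hψ]
        simp only
        rw [Real.sq_sqrt (by nlinarith), add_sub_cancel, Real.sqrt_sq hxnn]
      simp only [Function.comp, smul_eq_mul, hg, hψx, hψ']
      ring
  -- evenness of g
  have hgint : ∀ u v : ℝ, u ∈ Set.Icc (-L) L → v ∈ Set.Icc (-L) L →
      IntervalIntegrable g volume u v := by
    intro u v hu hv
    apply (hgcont.mono ?_).intervalIntegrable
    exact Set.uIcc_subset_Icc hu hv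
  have hmemL : L ∈ Set.Icc (-L) L := ⟨by linarith, le_refl _⟩
  have hmem0 : (0:ℝ) ∈ Set.Icc (-L) L := ⟨by linarith, hLnn⟩
  have hmemnegL : -L ∈ Set.Icc (-L) L := ⟨le_refl _, by linarith⟩
  have heven : (∫ z in (-L)..(0:ℝ), g z) = ∫ z in (0:ℝ)..L, g z := by
    have : (∫ z in (0:ℝ)..L, g (-z)) = ∫ z in (-L)..(0:ℝ), g z := by
      simpa using intervalIntegral.integral_comp_neg (a := (0:ℝ)) (b := L) (f := g)
    rw [← this]
    apply intervalIntegral.integral_congr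
    intro x _
    simp [hg, neg_pow]
  have hsplit : (∫ z in (-L)..L, g z)
      = (∫ z in (-L)..(0:ℝ), g z) + ∫ z in (0:ℝ)..L, g z := by
    rw [intervalIntegral.integral_add_adjacent_intervals
      (hgint _ _ hmemnegL hmem0) (hgint _ _ hmem0 hmemL)]
  show (∫ z in (-L)..L, g z) = 2 * ∫ s in r..a, f s * s / Real.sqrt (s ^ 2 - r ^ 2)
  rw [hsplit, heven, heq2]
  ring
end

section
/- Let a > 0, α > 0 and let m ≥ 1 be a natural number. Let φ be the Kaiser–Bessel window function with parameters (a, α, m) and let P(φ)(y) = ∫_ℝ φ(y₁, y₂, z) dz be its X-ray projection. Then for every y ∈ ℝ² with ‖y‖ ≤ a, P(φ)(y) = a · A · β_a(‖y‖)^{m + 1/2} · I_{m + 1/2}(α · β_a(‖y‖)), where A = √(2π/α) / I_m(α) and β_a(r) = √(1 − (r/a)²). -/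
open MeasureTheory

/-- Modified Bessel function of the first kind (Poisson integral representation). -/
noncomputable def besselI (ν x : ℝ) : ℝ :=
  ((x / 2) ^ ν / (Real.sqrt Real.pi * Real.Gamma (ν + 1 / 2))) *
    ∫ t in (-1 : ℝ)..1, Real.exp (x * t) * (1 - t ^ 2) ^ (ν - 1 / 2)

/-- Euclidean norm on `Fin n → ℝ`. -/
noncomputable def euclNorm {n : ℕ} (x : Fin n → ℝ) : ℝ :=
  Real.sqrt (∑ i, x i ^ 2)

/-- The Kaiser–Bessel window function with window radius `a`, shape parameter `α`
and order `m`. -/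
noncomputable def kbwf (a α : ℝ) (m : ℕ) (x : Fin 3 → ℝ) : ℝ :=
  if euclNorm x ≤ a then
    (1 / besselI m α) * Real.sqrt (1 - (euclNorm x / a) ^ 2) ^ m *
      besselI m (α * Real.sqrt (1 - (euclNorm x / a) ^ 2))
  else 0

/-- X-ray projection along the third axis: `P(φ)(y) = ∫_ℝ φ(y₁, y₂, z) dz`. -/
noncomputable def xray (φ : (Fin 3 → ℝ) → ℝ) (y : Fin 2 → ℝ) : ℝ :=
  ∫ z : ℝ, φ ![y 0, y 1, z]

/-- `β_a(r) = √(1 − (r/a)²)`. -/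
noncomputable def betaA (a r : ℝ) : ℝ :=
  Real.sqrt (1 - (r / a) ^ 2)


set_option maxHeartbeats 1000000

lemma cont_rpow_one_sub_sq (s : ℝ) (hs : 0 ≤ s) :
    Continuous (fun v : ℝ => (1 - v^2) ^ s) := by
  apply Continuous.rpow_const (by continuity)
  intro x; exact Or.inr hs

lemma rec_step (s : ℝ) (hs : 0 ≤ s) :
    ∫ v in (-1:ℝ)..1, (1 - v^2) ^ (s+1) =
      (2*s+2)/(2*s+3) * ∫ v in (-1:ℝ)..1, (1 - v^2) ^ s := by
  have hc0 := cont_rpow_one_sub_sq s hs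
  have hc1 := cont_rpow_one_sub_sq (s+1) (by linarith)
  have hderiv : ∀ v ∈ Set.uIcc (-1:ℝ) 1,
      HasDerivAt (fun v : ℝ => v * (1 - v^2) ^ (s+1))
        ((1-v^2)^(s+1) - (2*s+2) * (v^2 * (1-v^2)^s)) v := by
    intro v _
    have h1 : HasDerivAt (fun v:ℝ => 1 - v^2) (-(2*v)) v := by
      simpa using ((hasDerivAt_pow 2 v).const_sub 1)
    have h2 : HasDerivAt (fun x:ℝ => x ^ (s+1)) ((s+1) * (1-v^2) ^ s) (1-v^2) := by
      have := Real.hasDerivAt_rpow_const (p := s+1) (x := 1-v^2) (Or.inr (by linarith))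
      simpa using this
    have h4 : HasDerivAt (fun v : ℝ => v * (1 - v^2) ^ (s+1))
        (1 * (1-v^2)^(s+1) + v * ((s+1) * (1-v^2)^s * -(2*v))) v := by
      have h5 := (hasDerivAt_id v).mul (h2.comp v h1)
      exact h5
    convert h4 using 1; ring
  have hint : IntervalIntegrable
      (fun v => (1-v^2)^(s+1) - (2*s+2) * (v^2 * (1-v^2)^s)) volume (-1) 1 := by
    apply Continuous.intervalIntegrable
    continuity
  have hFTC := intervalIntegral.integral_eq_sub_of_hasDerivAt hderiv hint
  have hzero : (fun v : ℝ => v * (1 - v^2) ^ (s+1)) 1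
      - (fun v : ℝ => v * (1 - v^2) ^ (s+1)) (-1) = 0 := by
    norm_num
    exact Real.zero_rpow (by linarith)
  rw [hzero] at hFTC
  have hsplit : ∫ v in (-1:ℝ)..1, ((1-v^2)^(s+1) - (2*s+2) * (v^2 * (1-v^2)^s))
      = (∫ v in (-1:ℝ)..1, (1-v^2)^(s+1))
        - (2*s+2) * ∫ v in (-1:ℝ)..1, v^2 * (1-v^2)^s := by
    rw [intervalIntegral.integral_sub (hc1.intervalIntegrable _ _)
      (by apply Continuous.intervalIntegrable; continuity),
      intervalIntegral.integral_const_mul]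
  have hmid : ∫ v in (-1:ℝ)..1, v^2 * (1-v^2)^s
      = (∫ v in (-1:ℝ)..1, (1-v^2)^s) - ∫ v in (-1:ℝ)..1, (1-v^2)^(s+1) := by
    rw [← intervalIntegral.integral_sub (hc0.intervalIntegrable _ _)
      (hc1.intervalIntegrable _ _)]
    apply intervalIntegral.integral_congr
    intro v hv
    simp only [Set.uIcc_of_le (by norm_num : (-1:ℝ) ≤ 1), Set.mem_Icc] at hv
    show v^2 * (1-v^2)^s = (1-v^2)^s - (1-v^2)^(s+1)
    have hb : 0 ≤ 1 - v^2 := by nlinarith [hv.1, hv.2]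
    rcases eq_or_lt_of_le hb with h0 | h0
    · have hv1 : v^2 = 1 := by linarith
      rw [← h0, Real.zero_rpow (by linarith : s+1 ≠ 0), hv1]
      ring
    · rw [Real.rpow_add_one (ne_of_gt h0)]
      ring
  rw [hsplit, hmid] at hFTC
  have h23 : (2*s+3) ≠ 0 := by linarith
  field_simp
  linarith

lemma Cm_val (m : ℕ) (hm : 1 ≤ m) :
    ∫ v in (-1:ℝ)..1, (1 - v^2) ^ ((m:ℝ) - 1/2) =
      Real.sqrt Real.pi * Real.Gamma ((m:ℝ) + 1/2) / Real.Gamma ((m:ℝ) + 1) := by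
  induction m, hm using Nat.le_induction with
  | base =>
    have h1 : ∫ v in (-1:ℝ)..1, (1 - v^2) ^ (((1:ℕ):ℝ) - 1/2)
        = ∫ v in (-1:ℝ)..1, Real.sqrt (1 - v^2) := by
      apply intervalIntegral.integral_congr
      intro v _
      show (1 - v^2) ^ (((1:ℕ):ℝ) - 1/2) = Real.sqrt (1 - v^2)
      rw [Real.sqrt_eq_rpow]
      norm_num
    rw [h1, integral_sqrt_one_sub_sq]
    have h2 : ((1:ℕ):ℝ) + 1/2 = 1/2 + 1 := by norm_num
    have h3 : ((1:ℕ):ℝ) + 1 = 2 := by norm_num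
    rw [h2, Real.Gamma_add_one (by norm_num), Real.Gamma_one_half_eq, h3, Real.Gamma_two]
    have := Real.mul_self_sqrt Real.pi_pos.le
    nlinarith [this]
  | succ n hn ih =>
    have hn1 : (1:ℝ) ≤ (n:ℝ) := by exact_mod_cast hn
    have hcast : (((n+1:ℕ)):ℝ) - 1/2 = ((n:ℝ) - 1/2) + 1 := by push_cast; ring
    rw [hcast, rec_step ((n:ℝ)-1/2) (by linarith), ih]
    have e1 : (((n+1:ℕ)):ℝ) + 1/2 = ((n:ℝ)+1/2) + 1 := by push_cast; ring
    have e2 : (((n+1:ℕ)):ℝ) + 1 = ((n:ℝ)+1) + 1 := by push_cast; ring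
    rw [e1, Real.Gamma_add_one (s := (n:ℝ)+1/2) (by positivity), e2,
      Real.Gamma_add_one (s := (n:ℝ)+1) (by positivity)]
    have hb : Real.Gamma ((n:ℝ)+1) ≠ 0 := ne_of_gt (Real.Gamma_pos_of_pos (by linarith))
    have hd : (2*((n:ℝ)-1/2)+3) ≠ 0 := by linarith
    rw [div_mul_div_comm, div_eq_div_iff (by positivity) (by positivity)]
    ring

lemma kb_slice (c : ℝ) (m : ℕ) (p : ℝ) (hp : 0 < p) :
    (p^2)^m * ∫ t in (-1:ℝ)..1, Real.exp (c*(p*t)) * (1-t^2)^((m:ℝ)-1/2)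
    = ∫ w in (-p)..p, Real.exp (c*w) * (p^2 - w^2)^((m:ℝ)-1/2) := by
  have hdiv := intervalIntegral.integral_comp_div (a := -p) (b := p) (c := p)
    (fun t => Real.exp (c*(p*t)) * (1-t^2)^((m:ℝ)-1/2)) (ne_of_gt hp)
  rw [neg_div, div_self (ne_of_gt hp)] at hdiv
  have key : ∫ w in (-p)..p, Real.exp (c*w) * (p^2 - w^2)^((m:ℝ)-1/2)
      = ∫ w in (-p)..p, ((p^2)^m * p⁻¹) *
          (Real.exp (c*(p*(w/p))) * (1-(w/p)^2)^((m:ℝ)-1/2)) := by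
    apply intervalIntegral.integral_congr
    intro w hw
    simp only [Set.uIcc_of_le (by linarith : -p ≤ p), Set.mem_Icc] at hw
    have hw2 : w^2 ≤ p^2 := by nlinarith [hw.1, hw.2]
    show Real.exp (c*w) * (p^2 - w^2)^((m:ℝ)-1/2)
      = (p^2)^m * p⁻¹ * (Real.exp (c*(p*(w/p))) * (1-(w/p)^2)^((m:ℝ)-1/2))
    have hpw : p * (w/p) = w := by field_simp
    have hfrac : 1 - (w/p)^2 = (p^2 - w^2) / p^2 := by field_simp
    rw [hpw, hfrac, Real.div_rpow (by linarith) (by positivity)]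
    have hrat : ((p^2:ℝ))^((m:ℝ)-1/2) * p = (p^2)^m := by
      have h1 : p = (p^2:ℝ) ^ ((1:ℝ)/2) := by rw [← Real.sqrt_eq_rpow, Real.sqrt_sq hp.le]
      rw [← Real.rpow_natCast (p^2) m]
      nth_rewrite 2 [h1]
      rw [← Real.rpow_add (by positivity)]
      norm_num
    have hne : ((p^2:ℝ))^((m:ℝ)-1/2) ≠ 0 := by positivity
    have hp0 := ne_of_gt hp
    rw [← hrat]
    field_simp
  rw [key, intervalIntegral.integral_const_mul, hdiv]
  simp only [smul_eq_mul]
  have hp' := ne_of_gt hp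
  field_simp

lemma int_max_helper (g : ℝ → ℝ) (d : ℝ) (e : ℝ) (he : 0 < e) :
    ∫ x : ℝ, g x * (max (d - x^2) 0) ^ e
    = ∫ x in (-Real.sqrt d)..(Real.sqrt d), g x * (d - x^2) ^ e := by
  rcases le_or_gt d 0 with hd | hd
  · have hsq : Real.sqrt d = 0 := Real.sqrt_eq_zero_of_nonpos hd
    rw [hsq, neg_zero, intervalIntegral.integral_same]
    have hz : ∀ x : ℝ, g x * (max (d - x^2) 0) ^ e = 0 := by
      intro x
      rw [max_eq_right (by nlinarith [sq_nonneg x]), Real.zero_rpow (ne_of_gt he), mul_zero]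
    simp only [hz, integral_zero]
  · have hp : 0 < Real.sqrt d := Real.sqrt_pos.mpr hd
    have hp2 : Real.sqrt d ^ 2 = d := Real.sq_sqrt hd.le
    have hind : (fun x : ℝ => g x * (max (d - x^2) 0) ^ e)
        = Set.indicator (Set.Icc (-Real.sqrt d) (Real.sqrt d))
            (fun x => g x * (d - x^2) ^ e) := by
      funext x
      by_cases hx : x ∈ Set.Icc (-Real.sqrt d) (Real.sqrt d)
      · rw [Set.indicator_of_mem hx]
        simp only [Set.mem_Icc] at hx
        have : 0 ≤ d - x^2 := by nlinarith [hx.1, hx.2]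
        rw [max_eq_left this]
      · rw [Set.indicator_of_notMem hx]
        simp only [Set.mem_Icc, not_and_or, not_le] at hx
        have : d - x^2 < 0 := by rcases hx with h | h <;> nlinarith
        rw [max_eq_right this.le, Real.zero_rpow (ne_of_gt he), mul_zero]
    rw [hind, MeasureTheory.integral_indicator measurableSet_Icc,
      MeasureTheory.integral_Icc_eq_integral_Ioc,
      ← intervalIntegral.integral_of_le (by linarith)]

lemma kb_fubini (c : ℝ) (m : ℕ) (hm : 1 ≤ m) :
    (∫ u in (-1:ℝ)..1, ∫ w in (-Real.sqrt (1-u^2))..(Real.sqrt (1-u^2)),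
        Real.exp (c*w) * (1-u^2-w^2)^((m:ℝ)-1/2))
    = ∫ w in (-1:ℝ)..1, Real.exp (c*w) *
        ∫ u in (-Real.sqrt (1-w^2))..(Real.sqrt (1-w^2)), (1-u^2-w^2)^((m:ℝ)-1/2) := by
  set e : ℝ := (m:ℝ) - 1/2 with he_def
  have he : 0 < e := by
    have : (1:ℝ) ≤ (m:ℝ) := by exact_mod_cast hm
    rw [he_def]; linarith
  set G : ℝ → ℝ → ℝ := fun u w => Real.exp (c*w) * (max (1 - u^2 - w^2) 0) ^ e with hG_def
  -- continuity
  have hGcont : Continuous (Function.uncurry G) := by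
    apply Continuous.mul
    · exact Real.continuous_exp.comp (continuous_const.mul continuous_snd)
    · apply Continuous.rpow_const
      · exact ((continuous_const.sub ((continuous_fst.pow 2))).sub
          (continuous_snd.pow 2)).max continuous_const
      · intro x; exact Or.inr he.le
  have hGsupp : HasCompactSupport (Function.uncurry G) := by
    apply HasCompactSupport.intro (isCompact_Icc.prod isCompact_Icc :
      IsCompact ((Set.Icc (-1:ℝ) 1) ×ˢ (Set.Icc (-1:ℝ) 1)))
    rintro ⟨u, w⟩ hq
    simp only [Set.mem_prod, Set.mem_Icc, not_and_or, not_le] at hq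
    have h1 : 1 < u^2 ∨ 1 < w^2 := by
      rcases hq with (h | h) | (h | h)
      · left; nlinarith
      · left; nlinarith
      · right; nlinarith
      · right; nlinarith
    have hneg : 1 - u^2 - w^2 ≤ 0 := by
      rcases h1 with h | h <;> nlinarith [sq_nonneg u, sq_nonneg w]
    show Real.exp (c*w) * (max (1 - u^2 - w^2) 0) ^ e = 0
    rw [max_eq_right hneg, Real.zero_rpow (ne_of_gt he), mul_zero]
  have hInt : Integrable (Function.uncurry G) (volume.prod volume) := by
    rw [← Measure.volume_eq_prod]
    exact hGcont.integrable_of_hasCompactSupport hGsupp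
  have hswap := MeasureTheory.integral_integral_swap hInt
  -- inner w integral
  have hinnerW : ∀ u : ℝ, (∫ w : ℝ, G u w)
      = ∫ w in (-Real.sqrt (1-u^2))..(Real.sqrt (1-u^2)),
          Real.exp (c*w) * (1-u^2-w^2)^e := by
    intro u
    exact int_max_helper (fun w => Real.exp (c*w)) (1-u^2) e he
  -- inner u integral
  have hinnerU : ∀ w : ℝ, (∫ u : ℝ, G u w)
      = Real.exp (c*w) * ∫ u in (-Real.sqrt (1-w^2))..(Real.sqrt (1-w^2)),
          (1-u^2-w^2)^e := by
    intro w
    have h1 : (∫ u : ℝ, G u w) = Real.exp (c*w) * ∫ u : ℝ, (max (1-w^2-u^2) 0) ^ e := by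
      rw [← MeasureTheory.integral_const_mul]
      congr 1; funext u
      show Real.exp (c*w) * (max (1 - u^2 - w^2) 0) ^ e = _
      rw [show (1:ℝ) - u^2 - w^2 = 1 - w^2 - u^2 by ring]
    rw [h1]
    have h2 := int_max_helper (fun _ => (1:ℝ)) (1-w^2) e he
    simp only [one_mul] at h2
    rw [h2]
    congr 1
    apply intervalIntegral.integral_congr
    intro u _
    show (1 - w^2 - u^2 : ℝ) ^ e = (1 - u^2 - w^2 : ℝ) ^ e
    rw [show (1:ℝ) - w^2 - u^2 = 1 - u^2 - w^2 by ring]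
  -- reduce outer integrals to interval integrals
  have hzeroJ : ∀ u : ℝ, u ∉ Set.Icc (-1:ℝ) 1 → (∫ w : ℝ, G u w) = 0 := by
    intro u hu
    rw [hinnerW u]
    simp only [Set.mem_Icc, not_and_or, not_le] at hu
    have : 1 - u^2 ≤ 0 := by rcases hu with h | h <;> nlinarith
    rw [Real.sqrt_eq_zero_of_nonpos this, neg_zero, intervalIntegral.integral_same]
  have hzeroK : ∀ w : ℝ, w ∉ Set.Icc (-1:ℝ) 1 → (∫ u : ℝ, G u w) = 0 := by
    intro w hw
    rw [hinnerU w]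
    simp only [Set.mem_Icc, not_and_or, not_le] at hw
    have : 1 - w^2 ≤ 0 := by rcases hw with h | h <;> nlinarith
    rw [Real.sqrt_eq_zero_of_nonpos this, neg_zero, intervalIntegral.integral_same, mul_zero]
  have houterL : (∫ u : ℝ, ∫ w : ℝ, G u w) = ∫ u in (-1:ℝ)..1, ∫ w : ℝ, G u w := by
    rw [intervalIntegral.integral_of_le (by norm_num : (-1:ℝ) ≤ 1),
      ← MeasureTheory.integral_Icc_eq_integral_Ioc,
      ← MeasureTheory.integral_indicator measurableSet_Icc]
    congr 1; funext u
    by_cases hu : u ∈ Set.Icc (-1:ℝ) 1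
    · rw [Set.indicator_of_mem hu]
    · rw [Set.indicator_of_notMem hu, hzeroJ u hu]
  have houterR : (∫ w : ℝ, ∫ u : ℝ, G u w) = ∫ w in (-1:ℝ)..1, ∫ u : ℝ, G u w := by
    rw [intervalIntegral.integral_of_le (by norm_num : (-1:ℝ) ≤ 1),
      ← MeasureTheory.integral_Icc_eq_integral_Ioc,
      ← MeasureTheory.integral_indicator measurableSet_Icc]
    congr 1; funext w
    by_cases hw : w ∈ Set.Icc (-1:ℝ) 1
    · rw [Set.indicator_of_mem hw]
    · rw [Set.indicator_of_notMem hw, hzeroK w hw]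
  calc (∫ u in (-1:ℝ)..1, ∫ w in (-Real.sqrt (1-u^2))..(Real.sqrt (1-u^2)),
        Real.exp (c*w) * (1-u^2-w^2)^e)
      = ∫ u in (-1:ℝ)..1, ∫ w : ℝ, G u w := by
        apply intervalIntegral.integral_congr
        intro u _; exact (hinnerW u).symm
    _ = ∫ u : ℝ, ∫ w : ℝ, G u w := houterL.symm
    _ = ∫ w : ℝ, ∫ u : ℝ, G u w := hswap
    _ = ∫ w in (-1:ℝ)..1, ∫ u : ℝ, G u w := houterR
    _ = ∫ w in (-1:ℝ)..1, Real.exp (c*w) *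
          ∫ u in (-Real.sqrt (1-w^2))..(Real.sqrt (1-w^2)), (1-u^2-w^2)^e := by
        apply intervalIntegral.integral_congr
        intro w _; exact hinnerU w

lemma rpow_nat_add_half (x : ℝ) (hx : 0 < x) (m : ℕ) :
    x ^ ((m:ℝ)+1/2) = x^m * Real.sqrt x := by
  rw [Real.rpow_add hx, Real.rpow_natCast, ← Real.sqrt_eq_rpow]


/-- Closed form of the X-ray projection of the Kaiser–Bessel window function: for `‖y‖ ≤ a`,
`P(φ)(y) = a · A · β_a(‖y‖)^{m + 1/2} · I_{m + 1/2}(α · β_a(‖y‖))` with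
`A = √(2π/α) / I_m(α)`. -/
theorem xray_kbwf (a α : ℝ) (m : ℕ) (ha : a > 0) (hα : α > 0) (hm : 1 ≤ m)
    (y : Fin 2 → ℝ) (hy : euclNorm y ≤ a) :
    xray (kbwf a α m) y =
      a * (Real.sqrt (2 * Real.pi / α) / besselI m α) *
        betaA a (euclNorm y) ^ ((m : ℝ) + 1 / 2) *
          besselI ((m : ℝ) + 1 / 2) (α * betaA a (euclNorm y)) := by
  have hm1 : (1:ℝ) ≤ (m:ℝ) := by exact_mod_cast hm
  set r := euclNorm y with hr_def
  have hr0 : 0 ≤ r := Real.sqrt_nonneg _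
  set b := betaA a r with hb_def
  have hb0 : 0 ≤ b := Real.sqrt_nonneg _
  have hfrac : (r/a)^2 ≤ 1 := by
    rw [div_pow, div_le_one (by positivity)]
    nlinarith
  have hb2 : b^2 = 1 - (r/a)^2 := Real.sq_sqrt (by linarith)
  have hab2 : a^2*b^2 = a^2 - r^2 := by
    rw [hb2]; field_simp
  have hy2 : r^2 = y 0^2 + y 1^2 := by
    rw [hr_def]
    simp only [euclNorm, Fin.sum_univ_two]
    exact Real.sq_sqrt (by positivity)
  have hnormz : ∀ z : ℝ, euclNorm ![y 0, y 1, z] = Real.sqrt (r^2 + z^2) := by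
    intro z
    simp only [euclNorm, Fin.sum_univ_three, Matrix.cons_val_zero, Matrix.cons_val_one,
      Matrix.head_cons, Matrix.cons_val_two, Matrix.tail_cons]
    congr 1
    linarith [hy2]
  set C0 : ℝ := 1 / besselI m α with hC0_def
  set F : ℝ → ℝ := fun z => C0 * Real.sqrt ((a^2*b^2 - z^2)/a^2) ^ m *
      besselI m (α * Real.sqrt ((a^2*b^2 - z^2)/a^2)) with hF_def
  have hA : (fun z : ℝ => kbwf a α m ![y 0, y 1, z])
      = Set.indicator (Set.Icc (-(a*b)) (a*b)) F := by
    funext z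
    by_cases hz : z ∈ Set.Icc (-(a*b)) (a*b)
    · rw [Set.indicator_of_mem hz]
      simp only [Set.mem_Icc] at hz
      have hz2 : z^2 ≤ a^2*b^2 := by
        rw [show a^2*b^2 = (a*b)^2 by ring]
        exact sq_le_sq' hz.1 hz.2
      have hcond : euclNorm ![y 0, y 1, z] ≤ a := by
        rw [hnormz z]
        rw [Real.sqrt_le_left ha.le]
        nlinarith
      rw [kbwf, if_pos hcond, hnormz z]
      have harg : 1 - (Real.sqrt (r^2+z^2)/a)^2 = (a^2*b^2 - z^2)/a^2 := by
        rw [div_pow, Real.sq_sqrt (by positivity)]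
        field_simp
        linarith
      rw [harg]
    · rw [Set.indicator_of_notMem hz, kbwf, if_neg]
      rw [hnormz z]
      intro hcon
      rw [Real.sqrt_le_left ha.le] at hcon
      apply hz
      simp only [Set.mem_Icc]
      have hz2 : z^2 ≤ (a*b)^2 := by nlinarith
      have := abs_le_of_sq_le_sq hz2 (by positivity)
      exact abs_le.mp this
  have hxray : xray (kbwf a α m) y = ∫ z in (-(a*b))..(a*b), F z := by
    simp only [xray]
    rw [hA, MeasureTheory.integral_indicator measurableSet_Icc,
      MeasureTheory.integral_Icc_eq_integral_Ioc,
      ← intervalIntegral.integral_of_le (by nlinarith : -(a*b) ≤ a*b)]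
  rcases eq_or_lt_of_le hb0 with hb | hb
  · -- b = 0
    rw [hxray, ← hb]
    simp [Real.zero_rpow (show ((m:ℝ)+1/2) ≠ 0 by positivity)]
    exact Or.inl (Or.inr (Real.zero_rpow (by positivity)))
  -- b > 0
  have hab : 0 < a*b := mul_pos ha hb
  set c : ℝ := α*b with hc_def
  have hc : 0 < c := mul_pos hα hb
  set Ga : ℝ := Real.Gamma ((m:ℝ)+1/2) with hGa_def
  set Gb : ℝ := Real.Gamma ((m:ℝ)+1) with hGb_def
  have hGa : 0 < Ga := Real.Gamma_pos_of_pos (by positivity)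
  have hGb : 0 < Gb := Real.Gamma_pos_of_pos (by positivity)
  set K2 : ℝ := (α*b^2/2)^m / (Real.sqrt Real.pi * Ga) with hK2_def
  have hE1 : (∫ z in (-(a*b))..(a*b), F z) = (a*b) * ∫ u in (-1:ℝ)..1, F ((a*b)*u) := by
    have h := intervalIntegral.integral_comp_mul_left (a := (-1:ℝ)) (b := 1) F (ne_of_gt hab)
    rw [mul_neg_one, mul_one] at h
    rw [h, smul_eq_mul]
    field_simp
  have hE2 : ∀ u ∈ Set.uIcc (-1:ℝ) 1, F ((a*b)*u)
      = C0 * K2 * ∫ w in (-Real.sqrt (1-u^2))..(Real.sqrt (1-u^2)),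
          Real.exp (c*w) * (1-u^2-w^2)^((m:ℝ)-1/2) := by
    intro u hu
    rw [Set.uIcc_of_le (by norm_num : (-1:ℝ) ≤ 1), Set.mem_Icc] at hu
    have hu2 : u^2 ≤ 1 := by nlinarith [hu.1, hu.2]
    have hfrac2 : (a^2*b^2 - ((a*b)*u)^2)/a^2 = b^2*(1-u^2) := by
      field_simp
    have hsq : Real.sqrt ((a^2*b^2 - ((a*b)*u)^2)/a^2) = b * Real.sqrt (1-u^2) := by
      rw [hfrac2, Real.sqrt_mul (sq_nonneg b), Real.sqrt_sq hb.le]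
    simp only [hF_def]
    rw [hsq]
    set p : ℝ := Real.sqrt (1-u^2) with hp_def
    have hp0 : 0 ≤ p := Real.sqrt_nonneg _
    have hp2 : p^2 = 1-u^2 := Real.sq_sqrt (by linarith)
    rcases eq_or_lt_of_le hp0 with hp | hp
    · rw [← hp]
      simp [zero_pow (show m ≠ 0 by omega)]
    · rw [besselI, Real.rpow_natCast]
      have hexp : (fun t : ℝ => Real.exp ((α*(b*p))*t) * (1-t^2)^((m:ℝ)-1/2))
          = fun t => Real.exp (c*(p*t)) * (1-t^2)^((m:ℝ)-1/2) := by
        funext t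
        rw [show (α*(b*p))*t = c*(p*t) by rw [hc_def]; ring]
      rw [hexp]
      simp only [show (1:ℝ)-u^2 = p^2 from hp2.symm]
      rw [← kb_slice c m p hp, hK2_def]
      ring
  set CmInt : ℝ := ∫ v in (-1:ℝ)..1, (1 - v^2) ^ ((m:ℝ) - 1/2) with hCmInt_def
  set D : ℝ := ∫ t in (-1:ℝ)..1, Real.exp (c*t) * (1-t^2)^m with hD_def
  have hE5 : ∀ w ∈ Set.uIcc (-1:ℝ) 1,
      Real.exp (c*w) * ∫ u in (-Real.sqrt (1-w^2))..(Real.sqrt (1-w^2)),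
        (1-u^2-w^2)^((m:ℝ)-1/2)
      = CmInt * (Real.exp (c*w) * (1-w^2)^m) := by
    intro w hw
    rw [Set.uIcc_of_le (by norm_num : (-1:ℝ) ≤ 1), Set.mem_Icc] at hw
    have hw2 : w^2 ≤ 1 := by nlinarith [hw.1, hw.2]
    set q : ℝ := Real.sqrt (1-w^2) with hq_def
    have hq0 : 0 ≤ q := Real.sqrt_nonneg _
    have hq2 : q^2 = 1-w^2 := Real.sq_sqrt (by linarith)
    rcases eq_or_lt_of_le hq0 with hq | hq
    · rw [← hq]
      rw [show (1:ℝ)-w^2 = 0 by rw [← hq2, ← hq]; ring]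
      simp [zero_pow (show m ≠ 0 by omega)]
    · have hslice := kb_slice 0 m q hq
      simp only [zero_mul, Real.exp_zero, one_mul] at hslice
      have hJ : (∫ u in (-q)..q, (1-u^2-w^2)^((m:ℝ)-1/2))
          = ∫ u in (-q)..q, (q^2-u^2)^((m:ℝ)-1/2) := by
        apply intervalIntegral.integral_congr
        intro u _
        show ((1:ℝ)-u^2-w^2) ^ ((m:ℝ)-1/2) = (q^2-u^2) ^ ((m:ℝ)-1/2)
        rw [show (1:ℝ)-u^2-w^2 = q^2-u^2 by rw [hq2]; ring]
      rw [hJ, ← hslice, hq2, ← hCmInt_def]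
      ring
  have hfinal : xray (kbwf a α m) y = (a*b) * (C0 * K2 * (CmInt * D)) := by
    rw [hxray, hE1, intervalIntegral.integral_congr hE2,
      intervalIntegral.integral_const_mul, kb_fubini c m hm,
      intervalIntegral.integral_congr hE5, intervalIntegral.integral_const_mul]
  rw [hfinal]
  -- expand RHS
  rw [div_eq_mul_one_div (Real.sqrt (2*Real.pi/α)) (besselI (↑m) α), ← hC0_def, besselI]
  rw [show ((m:ℝ)+1/2) + 1/2 = (m:ℝ)+1 by ring, ← hGb_def]
  simp only [show ∀ t : ℝ, (1-t^2)^(((m:ℝ)+1/2) - 1/2) = (1-t^2)^(m:ℕ) from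
    fun t => by rw [show ((m:ℝ)+1/2) - 1/2 = ((m:ℕ):ℝ) by push_cast; ring, Real.rpow_natCast]]
  rw [← hD_def]
  rw [hCmInt_def, Cm_val m hm, ← hGa_def, hK2_def]
  rw [rpow_nat_add_half b hb m, rpow_nat_add_half (c/2) (by positivity) m]
  have hsqpos : (0:ℝ) < Real.sqrt Real.pi := Real.sqrt_pos.mpr Real.pi_pos
  have hsq : Real.sqrt (2*Real.pi/α) * (Real.sqrt b * Real.sqrt (c/2)) = Real.sqrt Real.pi * b := by
    rw [← Real.sqrt_mul (by positivity) (c/2), ← Real.sqrt_mul (by positivity) (b*(c/2))]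
    rw [show 2*Real.pi/α*(b*(c/2)) = Real.pi*b^2 by rw [hc_def]; field_simp]
    rw [Real.sqrt_mul Real.pi_pos.le, Real.sqrt_sq hb.le]
  have hcb : (c/2)^m * b^m = (α*b^2/2)^m := by
    rw [← mul_pow, hc_def]; ring_nf
  have key1 : b * ((α*b^2/2)^m/(Real.sqrt Real.pi*Ga)) * (Real.sqrt Real.pi*Ga/Gb)
      = b*(α*b^2/2)^m/Gb := by
    field_simp
  have key2 : Real.sqrt (2*Real.pi/α) * (b^m*Real.sqrt b) *
        ((c/2)^m*Real.sqrt (c/2)/(Real.sqrt Real.pi*Gb))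
      = b*(α*b^2/2)^m/Gb := by
    calc Real.sqrt (2*Real.pi/α) * (b^m*Real.sqrt b) *
          ((c/2)^m*Real.sqrt (c/2)/(Real.sqrt Real.pi*Gb))
        = (Real.sqrt (2*Real.pi/α)*(Real.sqrt b*Real.sqrt (c/2))) * (b^m*(c/2)^m)
            / (Real.sqrt Real.pi*Gb) := by ring
      _ = Real.sqrt Real.pi * b * (b^m*(c/2)^m) / (Real.sqrt Real.pi*Gb) := by rw [hsq]
      _ = Real.sqrt Real.pi * (b*((c/2)^m*b^m)) / (Real.sqrt Real.pi*Gb) := by ring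
      _ = b*((c/2)^m*b^m)/Gb := mul_div_mul_left _ _ hsqpos.ne'
      _ = b*(α*b^2/2)^m/Gb := by rw [hcb]
  linear_combination a*C0*D*key1 - a*C0*D*key2
end

section
/- Let a > 0, α > 0 and let m ≥ 1 be a natural number. Let φ be the Kaiser–Bessel window function with parameters (a, α, m) and P(φ)(y) = ∫_ℝ φ(y₁, y₂, z) dz its X-ray projection. Then for every y ∈ ℝ² with ‖y‖ < a and each coordinate index v ∈ {1, 2}, the partial derivative of P(φ) with respect to y_v exists at y and equals ∂P(φ)/∂y_v (y) = −(α · y_v · A / a) · β_a(‖y‖)^{m − 1/2} · I_{m − 1/2}(α · β_a(‖y‖)), where A = √(2π/α) / I_m(α) and β_a(r) = √(1 − (r/a)²). -/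
open MeasureTheory

private lemma contRpowConst {p : ℝ} (hp : 0 < p) : Continuous fun x : ℝ => x ^ p :=
  continuous_iff_continuousAt.2 fun x => Real.continuousAt_rpow_const x p (Or.inr hp.le)

private lemma integral_eq_II (f : ℝ → ℝ)
    (hf : ∀ t : ℝ, t ∉ Set.Ioc (-1 : ℝ) 1 → f t = 0) :
    (∫ t : ℝ, f t) = ∫ t in (-1 : ℝ)..1, f t := by
  rw [intervalIntegral.integral_of_le (by norm_num : (-1:ℝ) ≤ 1)]
  exact (MeasureTheory.setIntegral_eq_integral_of_forall_compl_eq_zero hf).symm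

/-- full-line Poisson-type integral -/
noncomputable def Vr (p x : ℝ) : ℝ := ∫ t : ℝ, Real.exp (x * t) * (max 0 (1 - t ^ 2)) ^ p

private lemma outIoc' {t : ℝ} (ht : t ∉ Set.Ioc (-1 : ℝ) 1) : max 0 (1 - t ^ 2) = 0 := by
  have h1 : 1 ≤ t ^ 2 := by
    by_cases h : t ≤ -1
    · nlinarith
    · have : 1 < t := by
        by_contra h2
        exact ht ⟨by push_neg at h; linarith, by push_neg at h2; linarith⟩
      nlinarith
  exact max_eq_left (by linarith)

private lemma Vr_eq {p : ℝ} (hp : 0 < p) (x : ℝ) :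
    Vr p x = ∫ t in (-1 : ℝ)..1, Real.exp (x * t) * (1 - t ^ 2) ^ p := by
  rw [Vr, integral_eq_II]
  · refine intervalIntegral.integral_congr fun t ht => ?_
    rw [Set.uIcc_of_le (by norm_num : (-1:ℝ) ≤ 1), Set.mem_Icc] at ht
    rw [max_eq_right (by nlinarith : (0:ℝ) ≤ 1 - t ^ 2)]
  · intro t ht
    rw [outIoc' ht, Real.zero_rpow hp.ne', mul_zero]

private lemma Vr_nat {n : ℕ} (hn : 1 ≤ n) (x : ℝ) :
    Vr (n : ℝ) x = ∫ t in (-1 : ℝ)..1, Real.exp (x * t) * (1 - t ^ 2) ^ n := by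
  have : ∀ t : ℝ, Real.exp (x * t) * (max 0 (1 - t ^ 2)) ^ ((n : ℕ) : ℝ)
      = Real.exp (x * t) * (max 0 (1 - t ^ 2)) ^ n := fun t => by
    rw [Real.rpow_natCast]
  rw [Vr]
  simp only [this]
  rw [integral_eq_II]
  · refine intervalIntegral.integral_congr fun t ht => ?_
    rw [Set.uIcc_of_le (by norm_num : (-1:ℝ) ≤ 1), Set.mem_Icc] at ht
    rw [max_eq_right (by nlinarith : (0:ℝ) ≤ 1 - t ^ 2)]
  · intro t ht
    rw [outIoc' ht, zero_pow (by omega), mul_zero]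

private lemma scale_integral {c : ℝ} (hc : 0 < c) (x p : ℝ) :
    (∫ s : ℝ, Real.exp (x * s) * (max 0 (c ^ 2 - s ^ 2)) ^ p)
      = c ^ (2 * p + 1) * Vr p (x * c) := by
  have hkey : ∀ s : ℝ, Real.exp (x * s) * (max 0 (c ^ 2 - s ^ 2)) ^ p
      = c ^ (2 * p) * (Real.exp ((x * c) * (s / c)) * (max 0 (1 - (s / c) ^ 2)) ^ p) := by
    intro s
    have h1 : c ^ 2 - s ^ 2 = c ^ 2 * (1 - (s / c) ^ 2) := by
      field_simp
    have h2 : max 0 (c ^ 2 - s ^ 2) = c ^ 2 * max 0 (1 - (s / c) ^ 2) := by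
      rw [h1, mul_max_of_nonneg _ _ (sq_nonneg c), mul_zero]
    have h3 : (max 0 (c ^ 2 - s ^ 2)) ^ p = (c ^ 2) ^ p * (max 0 (1 - (s / c) ^ 2)) ^ p := by
      rw [h2, Real.mul_rpow (sq_nonneg c) (le_max_left _ _)]
    have h4 : ((c : ℝ) ^ 2) ^ p = c ^ (2 * p) := by
      rw [← Real.rpow_natCast c 2, ← Real.rpow_mul hc.le]
      norm_num
    have h5 : x * c * (s / c) = x * s := by field_simp
    rw [h3, h4, h5]; ring
  simp only [hkey]
  rw [MeasureTheory.integral_const_mul,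
    MeasureTheory.Measure.integral_comp_div (fun t => Real.exp ((x * c) * t) * (max 0 (1 - t ^ 2)) ^ p) c]
  rw [smul_eq_mul, abs_of_pos hc, ← Vr]
  rw [Real.rpow_add hc, Real.rpow_one]
  ring

private lemma kbwf_eq (a α : ℝ) (m : ℕ) (ha : 0 < a) (hm : 1 ≤ m) (x : Fin 3 → ℝ) :
    kbwf a α m x = ((α / 2) ^ m / (Real.sqrt Real.pi * Real.Gamma ((m : ℝ) + 1 / 2))
        / besselI m α)
      * ∫ s : ℝ, Real.exp (α * s) *
          (max 0 ((1 - (euclNorm x / a) ^ 2) - s ^ 2)) ^ ((m : ℝ) - 1 / 2) := by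
  have hm1 : (1:ℝ) ≤ (m:ℝ) := by exact_mod_cast hm
  have hp : (0:ℝ) < (m : ℝ) - 1 / 2 := by linarith
  have hEnn : 0 ≤ euclNorm x := Real.sqrt_nonneg _
  by_cases hxa : euclNorm x ≤ a
  · have hd1 : euclNorm x / a ≤ 1 := (div_le_one ha).2 hxa
    have hd0 : 0 ≤ euclNorm x / a := div_nonneg hEnn ha.le
    have hQ : 0 ≤ 1 - (euclNorm x / a) ^ 2 := by nlinarith
    rcases eq_or_lt_of_le hQ with hQ0 | hQpos
    · have hc : Real.sqrt (1 - (euclNorm x / a) ^ 2) = 0 := by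
        rw [← hQ0]; exact Real.sqrt_zero
      have hz : ∀ s : ℝ, Real.exp (α * s) *
          (max 0 ((1 - (euclNorm x / a) ^ 2) - s ^ 2)) ^ ((m : ℝ) - 1 / 2) = 0 := by
        intro s
        rw [max_eq_left (by nlinarith [sq_nonneg s]), Real.zero_rpow hp.ne', mul_zero]
      rw [kbwf, if_pos hxa, hc]
      simp only [hz, integral_zero, mul_zero, zero_pow (by omega : m ≠ 0), zero_mul, mul_zero]
    · set c := Real.sqrt (1 - (euclNorm x / a) ^ 2) with hcdef
      have hc : 0 < c := Real.sqrt_pos.2 hQpos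
      have hc2 : c ^ 2 = 1 - (euclNorm x / a) ^ 2 := Real.sq_sqrt hQ
      have hbI : besselI (m : ℝ) (α * c)
          = ((α * c / 2) ^ ((m : ℝ)) / (Real.sqrt Real.pi * Real.Gamma ((m : ℝ) + 1 / 2)))
            * Vr ((m : ℝ) - 1 / 2) (α * c) := by
        rw [besselI, ← Vr_eq hp (α * c)]
      rw [kbwf, if_pos hxa, ← hcdef, ← hc2, scale_integral hc α ((m : ℝ) - 1 / 2), hbI]
      have h1 : (α * c / 2) ^ ((m : ℝ)) = (α * c / 2) ^ m := Real.rpow_natCast _ m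
      have h2 : c ^ (2 * ((m : ℝ) - 1 / 2) + 1) = c ^ (2 * m) := by
        rw [show 2 * ((m : ℝ) - 1 / 2) + 1 = ((2 * m : ℕ) : ℝ) by push_cast; ring,
          Real.rpow_natCast]
      rw [h1, h2]
      ring
  · push_neg at hxa
    have hQ : 1 - (euclNorm x / a) ^ 2 < 0 := by
      have : 1 < euclNorm x / a := (one_lt_div ha).2 hxa
      nlinarith
    have hz : ∀ s : ℝ, Real.exp (α * s) *
        (max 0 ((1 - (euclNorm x / a) ^ 2) - s ^ 2)) ^ ((m : ℝ) - 1 / 2) = 0 := by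
      intro s
      rw [max_eq_left (by nlinarith [sq_nonneg s]), Real.zero_rpow hp.ne', mul_zero]
    rw [kbwf, if_neg (not_le.2 hxa)]
    simp only [hz, integral_zero, mul_zero]

private lemma inner_integral {a : ℝ} (ha : 0 < a) {p : ℝ} (hp : 0 < p) (D : ℝ) :
    (∫ z : ℝ, (max 0 (D - z ^ 2 / a ^ 2)) ^ p)
      = a * (max 0 D) ^ (p + 1 / 2) * Vr p 0 := by
  rcases le_or_gt D 0 with hD | hD
  · have hz : ∀ z : ℝ, (max 0 (D - z ^ 2 / a ^ 2)) ^ p = 0 := fun z => by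
      rw [max_eq_left
        (by nlinarith [div_nonneg (sq_nonneg z) (sq_nonneg a)] : D - z ^ 2 / a ^ 2 ≤ 0),
        Real.zero_rpow hp.ne']
    simp only [hz, integral_zero, max_eq_left hD,
      Real.zero_rpow (by positivity : p + 1 / 2 ≠ 0), mul_zero, zero_mul]
  · set c := a * Real.sqrt D with hcdef
    have hc : 0 < c := mul_pos ha (Real.sqrt_pos.2 hD)
    have hc2 : c ^ 2 = a ^ 2 * D := by rw [hcdef, mul_pow, Real.sq_sqrt hD.le]
    have hkey : ∀ z : ℝ, (max 0 (D - z ^ 2 / a ^ 2)) ^ p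
        = ((a ^ 2) ^ p)⁻¹ * (Real.exp ((0:ℝ) * z) * (max 0 (c ^ 2 - z ^ 2)) ^ p) := by
      intro z
      have h1 : D - z ^ 2 / a ^ 2 = (c ^ 2 - z ^ 2) / a ^ 2 := by
        rw [hc2]; field_simp
      have h2 : max 0 (D - z ^ 2 / a ^ 2) = (a ^ 2)⁻¹ * max 0 (c ^ 2 - z ^ 2) := by
        rw [h1, div_eq_inv_mul,
          mul_max_of_nonneg _ _ (by positivity : (0:ℝ) ≤ (a ^ 2)⁻¹), mul_zero]
      rw [h2, Real.mul_rpow (by positivity) (le_max_left _ _), zero_mul, Real.exp_zero,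
        one_mul, Real.inv_rpow (by positivity)]
    simp only [hkey]
    rw [MeasureTheory.integral_const_mul, scale_integral hc 0 p, zero_mul, max_eq_right hD.le]
    have ha2 : (a:ℝ) ^ ((2:ℕ):ℝ) = a ^ (2:ℕ) := Real.rpow_natCast a 2
    have hA : a ^ (2 * p + 1) = (a ^ 2) ^ p * a := by
      rw [Real.rpow_add ha, Real.rpow_one,
        show (2 * p : ℝ) = ((2:ℕ):ℝ) * p by norm_num, Real.rpow_mul ha.le, ha2]
    have hSD : (Real.sqrt D) ^ (2 * p + 1) = D ^ (p + 1 / 2) := by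
      rw [Real.sqrt_eq_rpow, ← Real.rpow_mul hD.le]
      congr 1
      ring
    have h3 : c ^ (2 * p + 1) = (a ^ 2) ^ p * a * D ^ (p + 1 / 2) := by
      rw [hcdef, Real.mul_rpow ha.le (Real.sqrt_nonneg D), hA, hSD]
    rw [h3]
    have hne : ((a ^ 2 : ℝ)) ^ p ≠ 0 := ne_of_gt (Real.rpow_pos_of_pos (by positivity) p)
    field_simp

private lemma xray_eq (a α : ℝ) (m : ℕ) (ha : 0 < a) (hm : 1 ≤ m) (y : Fin 2 → ℝ) :
    xray (kbwf a α m) y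
      = ((α / 2) ^ m / (Real.sqrt Real.pi * Real.Gamma ((m : ℝ) + 1 / 2)) / besselI m α)
        * (a * Vr ((m : ℝ) - 1 / 2) 0)
        * ∫ s : ℝ, Real.exp (α * s) *
            (max 0 ((1 - ((y 0) ^ 2 + (y 1) ^ 2) / a ^ 2) - s ^ 2)) ^ ((m : ℝ)) := by
  have hm1 : (1:ℝ) ≤ (m:ℝ) := by exact_mod_cast hm
  have hp : (0:ℝ) < (m : ℝ) - 1 / 2 := by linarith
  have hS : 0 ≤ (y 0) ^ 2 + (y 1) ^ 2 := by positivity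
  set F : ℝ → ℝ → ℝ := fun z s => Real.exp (α * s) *
      (max 0 ((1 - ((y 0) ^ 2 + (y 1) ^ 2) / a ^ 2 - z ^ 2 / a ^ 2) - s ^ 2)) ^ ((m : ℝ) - 1 / 2)
    with hFdef
  have hnorm : ∀ z : ℝ, (euclNorm ![y 0, y 1, z] / a) ^ 2
      = ((y 0) ^ 2 + (y 1) ^ 2 + z ^ 2) / a ^ 2 := by
    intro z
    rw [euclNorm, div_pow, Fin.sum_univ_three]
    simp only [Matrix.cons_val_zero, Matrix.cons_val_one, Matrix.head_cons,
      Matrix.cons_val_two, Matrix.tail_cons]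
    rw [Real.sq_sqrt (by positivity)]
  have hkb : ∀ z : ℝ, kbwf a α m ![y 0, y 1, z]
      = ((α / 2) ^ m / (Real.sqrt Real.pi * Real.Gamma ((m : ℝ) + 1 / 2)) / besselI m α)
        * ∫ s : ℝ, F z s := by
    intro z
    have hfun : (fun s : ℝ => Real.exp (α * s) *
        (max 0 ((1 - (euclNorm ![y 0, y 1, z] / a) ^ 2) - s ^ 2)) ^ ((m : ℝ) - 1 / 2)) = F z := by
      funext s
      rw [hFdef]
      rw [show (1 : ℝ) - (euclNorm ![y 0, y 1, z] / a) ^ 2 - s ^ 2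
          = (1 - ((y 0) ^ 2 + (y 1) ^ 2) / a ^ 2 - z ^ 2 / a ^ 2) - s ^ 2 by rw [hnorm z]; ring]
    rw [kbwf_eq a α m ha hm, hfun]
  have hcont : Continuous (Function.uncurry F) := by
    apply Continuous.mul
    · exact Real.continuous_exp.comp (continuous_const.mul continuous_snd)
    · exact (contRpowConst hp).comp (continuous_const.max (by fun_prop))
  have hsupp : HasCompactSupport (Function.uncurry F) := by
    apply HasCompactSupport.intro ((isCompact_Icc (a := -a) (b := a)).prod
      (isCompact_Icc (a := (-1:ℝ)) (b := 1)))
    rintro ⟨z, s⟩ hzs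
    have h1 : z ∉ Set.Icc (-a) a ∨ s ∉ Set.Icc (-1:ℝ) 1 := by
      by_contra hcon
      push_neg at hcon
      exact hzs (Set.mem_prod.mpr hcon)
    have harg : (1 - ((y 0) ^ 2 + (y 1) ^ 2) / a ^ 2 - z ^ 2 / a ^ 2) - s ^ 2 ≤ 0 := by
      have hd1 : 0 ≤ ((y 0) ^ 2 + (y 1) ^ 2) / a ^ 2 := by positivity
      rcases h1 with h | h
      · rw [Set.mem_Icc] at h
        have hz2 : a ^ 2 ≤ z ^ 2 := by
          rcases not_and_or.mp h with h2 | h2 <;> push_neg at h2 <;> nlinarith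
        have : (1:ℝ) ≤ z ^ 2 / a ^ 2 := (one_le_div (by positivity)).2 hz2
        nlinarith [sq_nonneg s]
      · rw [Set.mem_Icc] at h
        have hs2 : (1:ℝ) ≤ s ^ 2 := by
          rcases not_and_or.mp h with h2 | h2 <;> push_neg at h2 <;> nlinarith
        have : 0 ≤ z ^ 2 / a ^ 2 := by positivity
        nlinarith
    show F z s = 0
    simp only [hFdef]
    rw [max_eq_left harg, Real.zero_rpow hp.ne', mul_zero]
  have hswap : (∫ z : ℝ, ∫ s : ℝ, F z s) = ∫ s : ℝ, ∫ z : ℝ, F z s :=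
    integral_integral_swap_of_hasCompactSupport hcont hsupp
  have hinner : ∀ s : ℝ, (∫ z : ℝ, F z s)
      = (a * Vr ((m : ℝ) - 1 / 2) 0) * (Real.exp (α * s) *
          (max 0 ((1 - ((y 0) ^ 2 + (y 1) ^ 2) / a ^ 2) - s ^ 2)) ^ ((m : ℝ))) := by
    intro s
    have hfun2 : (fun z : ℝ => F z s) = fun z : ℝ => Real.exp (α * s) *
        (max 0 ((1 - ((y 0) ^ 2 + (y 1) ^ 2) / a ^ 2 - s ^ 2) - z ^ 2 / a ^ 2))
          ^ ((m : ℝ) - 1 / 2) := by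
      funext z
      simp only [hFdef]
      rw [show (1 - ((y 0) ^ 2 + (y 1) ^ 2) / a ^ 2 - z ^ 2 / a ^ 2) - s ^ 2
          = (1 - ((y 0) ^ 2 + (y 1) ^ 2) / a ^ 2 - s ^ 2) - z ^ 2 / a ^ 2 by ring]
    rw [hfun2, MeasureTheory.integral_const_mul, inner_integral ha hp]
    rw [show (m:ℝ) - 1 / 2 + 1 / 2 = (m:ℝ) by ring]
    ring
  rw [xray]
  simp only [hkb]
  rw [MeasureTheory.integral_const_mul, hswap]
  simp only [hinner]
  rw [MeasureTheory.integral_const_mul]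
  ring

noncomputable def Jn (n : ℕ) (x : ℝ) : ℝ :=
  ∫ t in (-1:ℝ)..1, Real.exp (x * t) * (1 - t ^ 2) ^ n
noncomputable def Kn (n : ℕ) (x : ℝ) : ℝ :=
  ∫ t in (-1:ℝ)..1, t * Real.exp (x * t) * (1 - t ^ 2) ^ n
noncomputable def Hh (α : ℝ) (m : ℕ) (q : ℝ) : ℝ :=
  ∫ s : ℝ, Real.exp (α * s) * (max 0 (q - s ^ 2)) ^ ((m : ℝ))

private lemma Hh_pos (α : ℝ) (m : ℕ) (hm : 1 ≤ m) {q : ℝ} (hq : 0 < q) :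
    Hh α m q = q ^ m * Real.sqrt q * Jn m (α * Real.sqrt q) := by
  have hc : 0 < Real.sqrt q := Real.sqrt_pos.2 hq
  have hc2 : Real.sqrt q ^ 2 = q := Real.sq_sqrt hq.le
  rw [Hh]
  conv_lhs => rw [← hc2]
  rw [scale_integral hc α ((m : ℝ))]
  rw [show 2 * (m : ℝ) + 1 = ((2 * m + 1 : ℕ) : ℝ) by push_cast; ring, Real.rpow_natCast]
  rw [Vr_nat hm, ← Jn]
  rw [pow_succ, pow_mul, hc2]

private lemma hasDerivAt_Jn (n : ℕ) (x₀ : ℝ) : HasDerivAt (Jn n) (Kn n x₀) x₀ := by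
  have key := intervalIntegral.hasDerivAt_integral_of_dominated_loc_of_deriv_le
    (F := fun x t => Real.exp (x * t) * (1 - t ^ 2) ^ n)
    (F' := fun x t => t * Real.exp (x * t) * (1 - t ^ 2) ^ n)
    (bound := fun _ => Real.exp (|x₀| + 1))
    (a := (-1:ℝ)) (b := 1) (μ := volume) (x₀ := x₀) (s := Metric.ball x₀ 1) (Metric.ball_mem_nhds x₀ one_pos)
    (Filter.Eventually.of_forall fun x => (Continuous.aestronglyMeasurable (by fun_prop)))
    ((Continuous.intervalIntegrable (by fun_prop) _ _))
    (Continuous.aestronglyMeasurable (by fun_prop))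
    ?_ (intervalIntegrable_const) ?_
  · exact key.2
  · refine Filter.Eventually.of_forall fun t ht x hx => ?_
    rw [Set.uIoc_of_le (by norm_num : (-1:ℝ) ≤ 1), Set.mem_Ioc] at ht
    have h1 : |t| ≤ 1 := by rw [abs_le]; constructor <;> linarith [ht.1, ht.2]
    have h2 : (0:ℝ) ≤ 1 - t ^ 2 := by nlinarith [abs_nonneg t, sq_abs t]
    have h3 : (1:ℝ) - t ^ 2 ≤ 1 := by nlinarith [sq_nonneg t]
    have h4 : Real.exp (x * t) ≤ Real.exp (|x₀| + 1) := by
      apply Real.exp_le_exp.2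
      have hxx : |x| ≤ |x₀| + 1 := by
        have := mem_ball_iff_norm.mp hx
        rw [Real.norm_eq_abs] at this
        calc |x| = |x₀ + (x - x₀)| := by ring_nf
          _ ≤ |x₀| + |x - x₀| := abs_add_le _ _
          _ ≤ |x₀| + 1 := by linarith
      calc x * t ≤ |x * t| := le_abs_self _
        _ = |x| * |t| := abs_mul _ _
        _ ≤ (|x₀| + 1) * 1 := by
            apply mul_le_mul hxx h1 (abs_nonneg t) (by positivity)
        _ = |x₀| + 1 := mul_one _
    have h5 : (1 - t ^ 2) ^ n ≤ 1 := pow_le_one₀ h2 h3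
    calc ‖t * Real.exp (x * t) * (1 - t ^ 2) ^ n‖
        = |t| * Real.exp (x * t) * (1 - t ^ 2) ^ n := by
          rw [Real.norm_eq_abs, abs_mul, abs_mul, abs_of_pos (Real.exp_pos _),
            abs_of_nonneg (pow_nonneg h2 n)]
      _ ≤ 1 * Real.exp (|x₀| + 1) * 1 := by
          apply mul_le_mul (mul_le_mul h1 h4 (Real.exp_pos _).le (by norm_num)) h5
            (pow_nonneg h2 n) (by positivity)
      _ = Real.exp (|x₀| + 1) := by ring
  · refine Filter.Eventually.of_forall fun t _ x _ => ?_
    have := (((hasDerivAt_id x).mul_const t).exp).mul_const ((1 - t ^ 2) ^ n)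
    simpa [mul_comm, mul_assoc, mul_left_comm] using this

private lemma parts (k : ℕ) (x : ℝ) :
    x * Kn (k + 1) x
      = 2 * ((k:ℝ) + 1) * Jn k x - (2 * ((k:ℝ) + 1) + 1) * Jn (k + 1) x := by
  have hftc : ∫ t in (-1:ℝ)..1,
      (x * (t * Real.exp (x * t) * (1 - t ^ 2) ^ (k + 1))
        + ((2 * ((k:ℝ) + 1) + 1) * (Real.exp (x * t) * (1 - t ^ 2) ^ (k + 1))
          - 2 * ((k:ℝ) + 1) * (Real.exp (x * t) * (1 - t ^ 2) ^ k)))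
      = 0 := by
    have hd : ∀ t ∈ Set.uIcc (-1:ℝ) 1,
        HasDerivAt (fun t => Real.exp (x * t) * (t * (1 - t ^ 2) ^ (k + 1)))
          (x * (t * Real.exp (x * t) * (1 - t ^ 2) ^ (k + 1))
            + ((2 * ((k:ℝ) + 1) + 1) * (Real.exp (x * t) * (1 - t ^ 2) ^ (k + 1))
              - 2 * ((k:ℝ) + 1) * (Real.exp (x * t) * (1 - t ^ 2) ^ k))) t := by
      intro t _
      have h1 : HasDerivAt (fun t : ℝ => Real.exp (x * t)) (Real.exp (x * t) * x) t := by
        simpa using (((hasDerivAt_id t).const_mul x)).exp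
      have h2 : HasDerivAt (fun t : ℝ => 1 - t ^ 2) (-(2 * t ^ 1)) t := by
        simpa using (hasDerivAt_pow 2 t).const_sub 1
      have h3 : HasDerivAt (fun t : ℝ => (1 - t ^ 2) ^ (k + 1))
          ((↑(k + 1) : ℝ) * (1 - t ^ 2) ^ k * (-(2 * t ^ 1))) t := by
        simpa [Pi.pow_def] using h2.pow (k + 1)
      have h4 : HasDerivAt (fun t : ℝ => t * (1 - t ^ 2) ^ (k + 1))
          (1 * (1 - t ^ 2) ^ (k + 1) + t * ((↑(k + 1) : ℝ) * (1 - t ^ 2) ^ k * (-(2 * t ^ 1)))) t :=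
        (hasDerivAt_id t).mul h3
      have h5 := h1.mul h4
      have heq : Real.exp (x * t) * x * (t * (1 - t ^ 2) ^ (k + 1))
            + Real.exp (x * t) *
              (1 * (1 - t ^ 2) ^ (k + 1) + t * ((↑(k + 1) : ℝ) * (1 - t ^ 2) ^ k * (-(2 * t ^ 1))))
          = x * (t * Real.exp (x * t) * (1 - t ^ 2) ^ (k + 1))
            + ((2 * ((k:ℝ) + 1) + 1) * (Real.exp (x * t) * (1 - t ^ 2) ^ (k + 1))
              - 2 * ((k:ℝ) + 1) * (Real.exp (x * t) * (1 - t ^ 2) ^ k)) := by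
        push_cast
        ring
      rw [← heq]
      exact h5
    rw [intervalIntegral.integral_eq_sub_of_hasDerivAt hd
      (Continuous.intervalIntegrable (by fun_prop) _ _)]
    norm_num
  rw [intervalIntegral.integral_add, intervalIntegral.integral_sub,
    intervalIntegral.integral_const_mul, intervalIntegral.integral_const_mul,
    intervalIntegral.integral_const_mul] at hftc
  · rw [← Jn, ← Jn, ← Kn] at hftc
    linarith
  all_goals exact Continuous.intervalIntegrable (by fun_prop) _ _

private lemma rec_step_s4 {ν : ℝ} (hν : 0 < ν) :
    (2 * ν + 3) * ∫ t in (-1:ℝ)..1, (1 - t ^ 2) ^ (ν + 1)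
      = (2 * ν + 2) * ∫ t in (-1:ℝ)..1, (1 - t ^ 2) ^ ν := by
  have hν1 : (0:ℝ) < ν + 1 := by linarith
  have hcont2 : Continuous fun t : ℝ => (1 - t ^ 2) ^ (ν + 1) :=
    (contRpowConst hν1).comp (by fun_prop)
  have hcontν : Continuous fun t : ℝ => (1 - t ^ 2) ^ ν :=
    (contRpowConst hν).comp (by fun_prop)
  have hftc : ∫ t in (-1:ℝ)..1,
      ((2 * ν + 3) * (1 - t ^ 2) ^ (ν + 1) - (2 * ν + 2) * (1 - t ^ 2) ^ ν) = 0 := by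
    rw [intervalIntegral.integral_eq_sub_of_hasDeriv_right_of_le (by norm_num)
      (f := fun t => t * (1 - t ^ 2) ^ (ν + 1))
      (Continuous.continuousOn (continuous_id.mul hcont2)) ?_
      (Continuous.intervalIntegrable (by
        exact (continuous_const.mul hcont2).sub (continuous_const.mul hcontν)) _ _)]
    · norm_num
      exact Real.zero_rpow (by linarith)
    · intro t ht
      rw [Set.mem_Ioo] at ht
      have hpos : 0 < 1 - t ^ 2 := by nlinarith
      have h2 : HasDerivAt (fun t : ℝ => 1 - t ^ 2) (-(2 * t ^ 1)) t := by
        simpa using (hasDerivAt_pow 2 t).const_sub 1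
      have h3 : HasDerivAt (fun t : ℝ => (1 - t ^ 2) ^ (ν + 1))
          ((ν + 1) * (1 - t ^ 2) ^ ν * (-(2 * t ^ 1))) t := by
        have := (Real.hasDerivAt_rpow_const (x := 1 - t ^ 2) (p := ν + 1)
          (Or.inl hpos.ne')).comp t h2
        simpa [Function.comp_def, mul_comm, mul_assoc, mul_left_comm, add_sub_cancel_right] using this
      have h4 : HasDerivAt (fun t : ℝ => t * (1 - t ^ 2) ^ (ν + 1))
          (1 * (1 - t ^ 2) ^ (ν + 1) + t * ((ν + 1) * (1 - t ^ 2) ^ ν * (-(2 * t ^ 1)))) t :=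
        (hasDerivAt_id t).mul h3
      have heq : 1 * (1 - t ^ 2) ^ (ν + 1) + t * ((ν + 1) * (1 - t ^ 2) ^ ν * (-(2 * t ^ 1)))
          = (2 * ν + 3) * (1 - t ^ 2) ^ (ν + 1) - (2 * ν + 2) * (1 - t ^ 2) ^ ν := by
        rw [Real.rpow_add_one hpos.ne' ν]
        ring
      rw [← heq]
      exact h4.hasDerivWithinAt
  rw [intervalIntegral.integral_sub, intervalIntegral.integral_const_mul,
    intervalIntegral.integral_const_mul] at hftc
  · linarith
  all_goals exact Continuous.intervalIntegrable (by fun_prop) _ _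

private lemma Bval_aux (k : ℕ) :
    (∫ t in (-1:ℝ)..1, (1 - t ^ 2) ^ ((k:ℝ) + 1/2))
      = Real.sqrt Real.pi * Real.Gamma (((k:ℝ) + 1) + 1/2) / (Nat.factorial (k+1) : ℝ) := by
  induction k with
  | zero =>
    have h1 : (fun t : ℝ => (1 - t ^ 2) ^ (((0:ℕ):ℝ) + 1/2))
        = fun t : ℝ => Real.sqrt (1 - t ^ 2) := by
      funext t
      rw [Real.sqrt_eq_rpow]
      norm_num
    rw [h1, integral_sqrt_one_sub_sq,
      show ((0:ℕ):ℝ) + 1 + 1/2 = 1/2 + 1 by norm_num,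
      Real.Gamma_add_one (by norm_num), Real.Gamma_one_half_eq,
      show Nat.factorial (0+1) = 1 from rfl,
      show √Real.pi * (1/2 * √Real.pi) / ((1:ℕ):ℝ) = √Real.pi * √Real.pi / 2 by push_cast; ring,
      Real.mul_self_sqrt Real.pi_pos.le]
  | succ n ih =>
    have hstep := rec_step_s4 (ν := (n:ℝ) + 1/2) (by positivity)
    have hexp : (fun t : ℝ => (1 - t ^ 2) ^ (((n+1:ℕ):ℝ) + 1/2))
        = fun t : ℝ => (1 - t ^ 2) ^ (((n:ℝ) + 1/2) + 1) := by
      funext t; congr 1; push_cast; ring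
    rw [hexp]
    have hI : (∫ t in (-1:ℝ)..1, (1 - t ^ 2) ^ (((n:ℝ)+1/2)+1))
        = (2*((n:ℝ)+1/2)+2) / (2*((n:ℝ)+1/2)+3)
          * ∫ t in (-1:ℝ)..1, (1 - t ^ 2) ^ ((n:ℝ)+1/2) := by
      rw [div_mul_eq_mul_div, eq_div_iff (by positivity)]
      linarith [hstep]
    rw [hI, ih,
      show (((n+1:ℕ)):ℝ) + 1 + 1/2 = (((n:ℝ) + 1) + 1/2) + 1 by push_cast; ring,
      Real.Gamma_add_one (by positivity), Nat.factorial_succ (n+1)]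
    have hfac : (Nat.factorial (n+1) : ℝ) ≠ 0 :=
      Nat.cast_ne_zero.2 (Nat.factorial_ne_zero _)
    push_cast
    field_simp
    ring

private lemma Bval (m : ℕ) (hm : 1 ≤ m) :
    Vr ((m:ℝ) - 1/2) 0
      = Real.sqrt Real.pi * Real.Gamma ((m:ℝ) + 1/2) / (Nat.factorial m : ℝ) := by
  obtain ⟨k, rfl⟩ : ∃ k, m = k + 1 := ⟨m - 1, by omega⟩
  have h0 : (0:ℝ) < ((k+1:ℕ):ℝ) - 1/2 := by
    push_cast
    have : (0:ℝ) ≤ (k:ℝ) := Nat.cast_nonneg k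
    linarith
  rw [Vr_eq h0]
  simp only [zero_mul, Real.exp_zero, one_mul]
  have hexp : (fun t : ℝ => (1 - t ^ 2) ^ (((k+1:ℕ):ℝ) - 1/2))
      = fun t : ℝ => (1 - t ^ 2) ^ ((k:ℝ) + 1/2) := by
    funext t; congr 1; push_cast; ring
  rw [hexp, Bval_aux k,
    show (k:ℝ) + 1 + 1/2 = ((k+1:ℕ):ℝ) + 1/2 by push_cast; ring]

private lemma algfin (α t₀ a s P Iv X Y J G F q₀ b : ℝ) (k : ℕ)
    (ha : a ≠ 0) (hα : α ≠ 0) (hs : s ≠ 0) (hP : P ≠ 0) (hG : G ≠ 0) (hF : F ≠ 0)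
    (hXY : X * Y = (α/2)^k * s * (q₀^k * b)) :
    -(α * t₀ * (s⁻¹ * P / Iv)/a) * X * (Y / (P * F) * J)
      = (α/2)^(k+1) / (P * G) / Iv * (a * (P * G / (((k:ℝ)+1) * F)))
        * (((k:ℝ)+1) * q₀^k * b * J * -(2*t₀/a^2)) := by
  have hk : ((k:ℝ)+1) ≠ 0 := by positivity
  have key : -(α * t₀ * (s⁻¹ * P)/a) / (P * F) * J * ((α/2)^k * s * (q₀^k * b))
      = (α/2)^(k+1) / (P * G) * (a * (P * G / (((k:ℝ)+1) * F)))
        * (((k:ℝ)+1) * q₀^k * b * J * -(2*t₀/a^2)) := by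
    field_simp
    ring
  calc -(α * t₀ * (s⁻¹ * P / Iv)/a) * X * (Y / (P * F) * J)
      = Iv⁻¹ * (-(α * t₀ * (s⁻¹ * P)/a) / (P * F) * J * (X * Y)) := by ring
    _ = Iv⁻¹ * (-(α * t₀ * (s⁻¹ * P)/a) / (P * F) * J * ((α/2)^k * s * (q₀^k * b))) := by
        rw [hXY]
    _ = Iv⁻¹ * ((α/2)^(k+1) / (P * G) * (a * (P * G / (((k:ℝ)+1) * F)))
        * (((k:ℝ)+1) * q₀^k * b * J * -(2*t₀/a^2))) := by rw [key]
    _ = (α/2)^(k+1) / (P * G) / Iv * (a * (P * G / (((k:ℝ)+1) * F)))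
        * (((k:ℝ)+1) * q₀^k * b * J * -(2*t₀/a^2)) := by ring

set_option maxHeartbeats 1000000 in
private lemma final_aux (a α : ℝ) (m : ℕ) (ha : 0 < a) (hα : 0 < α) (hm : 1 ≤ m)
    (w t₀ : ℝ) (hlt : t₀ ^ 2 + w ^ 2 < a ^ 2) :
    HasDerivAt (fun t : ℝ =>
        ((α / 2) ^ m / (Real.sqrt Real.pi * Real.Gamma ((m : ℝ) + 1 / 2)) / besselI m α)
          * (a * Vr ((m : ℝ) - 1 / 2) 0) * Hh α m (1 - (t ^ 2 + w ^ 2) / a ^ 2))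
      (-(α * t₀ * (Real.sqrt (2 * Real.pi / α) / besselI m α) / a) *
          Real.sqrt (1 - (t₀ ^ 2 + w ^ 2) / a ^ 2) ^ ((m : ℝ) - 1 / 2) *
            besselI ((m : ℝ) - 1 / 2) (α * Real.sqrt (1 - (t₀ ^ 2 + w ^ 2) / a ^ 2)))
      t₀ := by
  obtain ⟨k, rfl⟩ : ∃ k, m = k + 1 := ⟨m - 1, by omega⟩
  set q₀ : ℝ := 1 - (t₀ ^ 2 + w ^ 2) / a ^ 2 with hq₀def
  have hq₀ : 0 < q₀ := by
    rw [hq₀def]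
    have h1 : (t₀ ^ 2 + w ^ 2) / a ^ 2 < 1 := (div_lt_one (by positivity)).2 hlt
    linarith
  set b : ℝ := Real.sqrt q₀ with hbdef
  have hb : 0 < b := Real.sqrt_pos.2 hq₀
  have hb2 : b ^ 2 = q₀ := Real.sq_sqrt hq₀.le
  -- derivative of the inner composition q ↦ Jn (k+1) (α √q)
  have h3 : HasDerivAt (fun q : ℝ => Jn (k+1) (α * Real.sqrt q))
      (Kn (k+1) (α * b) * (α * (1 / (2 * b)))) q₀ := by
    have hin : HasDerivAt (fun q : ℝ => α * Real.sqrt q) (α * (1 / (2 * Real.sqrt q₀))) q₀ :=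
      (Real.hasDerivAt_sqrt hq₀.ne').const_mul α
    have := (hasDerivAt_Jn (k+1) (α * Real.sqrt q₀)).comp q₀ hin
    simpa [Function.comp_def, ← hbdef] using this
  have hraw : HasDerivAt (fun q : ℝ => q ^ (k+1) * Real.sqrt q * Jn (k+1) (α * Real.sqrt q))
      (((↑(k+1) * q₀ ^ (k + 1 - 1)) * Real.sqrt q₀ + q₀ ^ (k+1) * (1 / (2 * Real.sqrt q₀)))
          * Jn (k+1) (α * Real.sqrt q₀)
        + q₀ ^ (k+1) * Real.sqrt q₀ * (Kn (k+1) (α * b) * (α * (1 / (2 * b))))) q₀ :=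
    ((hasDerivAt_pow (k+1) q₀).mul (Real.hasDerivAt_sqrt hq₀.ne')).mul h3
  rw [← hbdef] at hraw
  have hval : ((↑(k+1) * q₀ ^ (k + 1 - 1)) * b + q₀ ^ (k+1) * (1 / (2 * b)))
          * Jn (k+1) (α * b)
        + q₀ ^ (k+1) * b * (Kn (k+1) (α * b) * (α * (1 / (2 * b))))
      = ((k:ℝ) + 1) * q₀ ^ k * b * Jn k (α * b) := by
    have hKn := parts k (α * b)
    set J1 := Jn (k+1) (α * b) with hJ1
    set J0 := Jn k (α * b) with hJ0
    set K1 := Kn (k+1) (α * b) with hK1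
    simp only [Nat.add_sub_cancel, Nat.cast_add, Nat.cast_one]
    rw [← hb2]
    field_simp
    linear_combination (b ^ (2*k + 2)) * hKn
  rw [hval] at hraw
  -- transfer to Hh
  have hev : Hh α (k+1) =ᶠ[nhds q₀] fun q => q ^ (k+1) * Real.sqrt q * Jn (k+1) (α * Real.sqrt q) := by
    filter_upwards [eventually_gt_nhds hq₀] with q hq
    exact Hh_pos α (k+1) hm hq
  have hH : HasDerivAt (Hh α (k+1)) (((k:ℝ) + 1) * q₀ ^ k * b * Jn k (α * b)) q₀ :=
    hraw.congr_of_eventuallyEq hev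
  -- the outer parametrization
  have hqt : HasDerivAt (fun t : ℝ => 1 - (t ^ 2 + w ^ 2) / a ^ 2) (-(2 * t₀ / a ^ 2)) t₀ := by
    have h1 : HasDerivAt (fun t : ℝ => t ^ 2 + w ^ 2) (2 * t₀) t₀ := by
      simpa using (hasDerivAt_pow 2 t₀).add_const (w ^ 2)
    have h2 := (h1.div_const (a ^ 2)).const_sub 1
    simpa using h2
  have hcomp := (hH.comp t₀ hqt).const_mul
    (((α / 2) ^ (k+1) / (Real.sqrt Real.pi * Real.Gamma (((k+1:ℕ) : ℝ) + 1 / 2)) / besselI ((k+1:ℕ)) α)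
      * (a * Vr (((k+1:ℕ) : ℝ) - 1 / 2) 0))
  have hfun : (fun t : ℝ =>
      ((α / 2) ^ (k+1) / (Real.sqrt Real.pi * Real.Gamma (((k+1:ℕ) : ℝ) + 1 / 2))
          / besselI ((k+1:ℕ)) α) * (a * Vr (((k+1:ℕ) : ℝ) - 1 / 2) 0)
        * Hh α (k+1) (1 - (t ^ 2 + w ^ 2) / a ^ 2))
      = fun t : ℝ =>
      (((α / 2) ^ (k+1) / (Real.sqrt Real.pi * Real.Gamma (((k+1:ℕ) : ℝ) + 1 / 2))
          / besselI ((k+1:ℕ)) α) * (a * Vr (((k+1:ℕ) : ℝ) - 1 / 2) 0))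
        * (Hh α (k+1) ∘ fun t : ℝ => 1 - (t ^ 2 + w ^ 2) / a ^ 2) t := rfl
  rw [hfun]
  refine hcomp.congr_deriv ?_
  symm
  -- now the value identity
  have hbI2 : besselI (((k+1:ℕ):ℝ) - 1/2) (α * b)
      = ((α * b / 2) ^ (((k+1:ℕ):ℝ) - 1/2) / (Real.sqrt Real.pi * (Nat.factorial k : ℝ)))
        * Jn k (α * b) := by
    rw [besselI, show ((k+1:ℕ):ℝ) - 1/2 + 1/2 = (k:ℝ) + 1 by push_cast; ring,
      Real.Gamma_nat_eq_factorial]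
    congr 1
    rw [Jn]
    refine intervalIntegral.integral_congr fun t _ => ?_
    rw [show ((k+1:ℕ):ℝ) - 1/2 - 1/2 = ((k:ℕ):ℝ) by push_cast; ring, Real.rpow_natCast]
  have hpow : b ^ (((k+1:ℕ):ℝ) - 1/2) * (α * b / 2) ^ (((k+1:ℕ):ℝ) - 1/2)
      = (α/2) ^ (((k+1:ℕ):ℝ) - 1/2) * (q₀ ^ k * b) := by
    rw [← Real.mul_rpow hb.le (by positivity),
      show b * (α * b / 2) = (α/2) * b ^ 2 by ring,
      Real.mul_rpow (by positivity) (by positivity)]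
    congr 1
    rw [← Real.rpow_natCast b 2, ← Real.rpow_mul hb.le,
      show ((2:ℕ):ℝ) * (((k+1:ℕ):ℝ) - 1/2) = ((2*k+1:ℕ):ℝ) by push_cast; ring,
      Real.rpow_natCast, pow_succ, pow_mul, hb2]
  have hμ : (α/2) ^ (((k+1:ℕ):ℝ) - 1/2) = (α/2) ^ k * Real.sqrt (α/2) := by
    rw [show ((k+1:ℕ):ℝ) - 1/2 = (k:ℝ) + 1/2 by push_cast; ring,
      Real.rpow_add (by positivity), Real.rpow_natCast, Real.sqrt_eq_rpow]
  have hsqrt2 : Real.sqrt (2 * Real.pi / α) = (Real.sqrt (α/2))⁻¹ * Real.sqrt Real.pi := by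
    rw [show 2 * Real.pi / α = (α/2)⁻¹ * Real.pi by field_simp,
      Real.sqrt_mul (by positivity), Real.sqrt_inv]
  have hfacs : ((k+1).factorial : ℝ) = ((k:ℝ) + 1) * (k.factorial : ℝ) := by
    rw [Nat.factorial_succ]; push_cast; ring
  have hXY : b ^ (((k+1:ℕ):ℝ) - 1/2) * (α * b / 2) ^ (((k+1:ℕ):ℝ) - 1/2)
      = (α/2) ^ k * Real.sqrt (α/2) * (q₀ ^ k * b) := by rw [hpow, hμ]
  rw [Bval (k+1) hm, hbI2, hsqrt2, hfacs]
  have hπ : Real.sqrt Real.pi ≠ 0 := by positivity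
  have hΓ : Real.Gamma (((k+1:ℕ):ℝ) + 1/2) ≠ 0 := by
    have : (0:ℝ) < ((k+1:ℕ):ℝ) + 1/2 := by positivity
    exact (Real.Gamma_pos_of_pos this).ne'
  have hfk : (k.factorial : ℝ) ≠ 0 := Nat.cast_ne_zero.2 (Nat.factorial_ne_zero _)
  have hsa : Real.sqrt (α/2) ≠ 0 := by positivity
  exact algfin α t₀ a (Real.sqrt (α/2)) (Real.sqrt Real.pi) (besselI ((k+1:ℕ)) α)
    (b ^ (((k+1:ℕ):ℝ) - 1/2)) ((α * b / 2) ^ (((k+1:ℕ):ℝ) - 1/2)) (Jn k (α * b))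
    (Real.Gamma (((k+1:ℕ):ℝ) + 1/2)) (Nat.factorial k : ℝ) q₀ b k
    ha.ne' hα.ne' hsa hπ hΓ hfk hXY

/-- Partial derivative of the X-ray projection of the Kaiser–Bessel window function:
for `‖y‖ < a` and each coordinate index `v`,
`∂P(φ)/∂y_v (y) = −(α · y_v · A / a) · β_a(‖y‖)^{m − 1/2} · I_{m − 1/2}(α · β_a(‖y‖))`
with `A = √(2π/α) / I_m(α)`. -/
theorem hasDerivAt_xray_kbwf (a α : ℝ) (m : ℕ) (ha : a > 0) (hα : α > 0) (hm : 1 ≤ m)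
    (y : Fin 2 → ℝ) (hy : euclNorm y < a) (v : Fin 2) :
    HasDerivAt (fun t : ℝ => xray (kbwf a α m) (Function.update y v t))
      (-(α * y v * (Real.sqrt (2 * Real.pi / α) / besselI m α) / a) *
          betaA a (euclNorm y) ^ ((m : ℝ) - 1 / 2) *
            besselI ((m : ℝ) - 1 / 2) (α * betaA a (euclNorm y)))
      (y v) := by
  have hS : euclNorm y ^ 2 = (y 0) ^ 2 + (y 1) ^ 2 := by
    rw [euclNorm, Real.sq_sqrt (by positivity), Fin.sum_univ_two]
  have hlt : (y 0) ^ 2 + (y 1) ^ 2 < a ^ 2 := by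
    rw [← hS]
    have h0 : 0 ≤ euclNorm y := Real.sqrt_nonneg _
    nlinarith
  have hbeta : betaA a (euclNorm y) = Real.sqrt (1 - ((y 0) ^ 2 + (y 1) ^ 2) / a ^ 2) := by
    rw [betaA, div_pow, hS]
  fin_cases v
  · have hfun : (fun t : ℝ => xray (kbwf a α m) (Function.update y 0 t))
        = fun t : ℝ =>
          ((α / 2) ^ m / (Real.sqrt Real.pi * Real.Gamma ((m : ℝ) + 1 / 2)) / besselI m α)
            * (a * Vr ((m : ℝ) - 1 / 2) 0) * Hh α m (1 - (t ^ 2 + (y 1) ^ 2) / a ^ 2) := by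
      funext t
      rw [xray_eq a α m ha hm]
      rw [show Function.update y 0 t 0 = t from Function.update_self 0 t y,
        show Function.update y 0 t 1 = y 1 from Function.update_of_ne (by decide) t y, Hh]
    simp only [Fin.zero_eta, Fin.mk_one, Fin.isValue]
    rw [hbeta, hfun]
    exact final_aux a α m ha hα hm (y 1) (y 0) hlt
  · have hfun : (fun t : ℝ => xray (kbwf a α m) (Function.update y 1 t))
        = fun t : ℝ =>
          ((α / 2) ^ m / (Real.sqrt Real.pi * Real.Gamma ((m : ℝ) + 1 / 2)) / besselI m α)
            * (a * Vr ((m : ℝ) - 1 / 2) 0) * Hh α m (1 - (t ^ 2 + (y 0) ^ 2) / a ^ 2) := by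
      funext t
      rw [xray_eq a α m ha hm]
      rw [show Function.update y 1 t 0 = y 0 from Function.update_of_ne (by decide) t y,
        show Function.update y 1 t 1 = t from Function.update_self 1 t y,
        show (y 0) ^ 2 + t ^ 2 = t ^ 2 + (y 0) ^ 2 by ring, Hh]
    simp only [Fin.zero_eta, Fin.mk_one, Fin.isValue]
    rw [hbeta, hfun,
      show (y 0) ^ 2 + (y 1) ^ 2 = (y 1) ^ 2 + (y 0) ^ 2 by ring]
    exact final_aux a α m ha hα hm (y 0) (y 1) (by linarith)
end
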